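/- arXiv:1201.5826 — 5 statements merged into one kernel-verified Lean document; each statement's English description precedes it below -/
import Mathlib

section
/- Let the coefficient assumptions hold and suppose for each ε ∈ (0,1), (n_ε, R_ε) is a nonnegative solution of the chemostat system with parameter ε and initial data n_ε(·,0) = n⁰, R_ε(·,0) = R⁰. Then for every T > 0, R_ε converges strongly to R_in in L¹((0,T) × ℝ) as ε → 0, i.e. ∫_0^T ∫_ℝ |R_ε(y,t) − R_in(y)| dy dt → 0 as ε → 0. -/
open MeasureTheory Filter

lemma integral_le_of_le' {f g : ℝ → ℝ} (hg : Integrable g) (hg0 : ∀ y, 0 ≤ g y)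
    (h : ∀ y, f y ≤ g y) : (∫ y, f y) ≤ ∫ y, g y := by
  by_cases hf : Integrable f
  · exact integral_mono hf hg h
  · rw [integral_undef hf]; exact integral_nonneg hg0

lemma setIntegral_le_of_le' {f g : ℝ → ℝ} {s : Set ℝ} (hs : MeasurableSet s)
    (hg : IntegrableOn g s) (hg0 : ∀ t ∈ s, 0 ≤ g t) (h : ∀ t ∈ s, f t ≤ g t) :
    (∫ t in s, f t) ≤ ∫ t in s, g t := by
  by_cases hf : IntegrableOn f s
  · exact setIntegral_mono_on hf hg hs h
  · rw [integral_undef hf]; exact setIntegral_nonneg hs hg0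

lemma gronwall_aux {T : ℝ} (f φ f' φ' : ℝ → ℝ)
    (hf : ∀ t ∈ Set.Icc 0 T, HasDerivAt f (f' t) t)
    (hφ : ∀ t ∈ Set.Icc 0 T, HasDerivAt φ (φ' t) t)
    (hle : ∀ t ∈ Set.Icc 0 T, f' t ≤ φ' t * f t) :
    ∀ t ∈ Set.Icc 0 T, f t ≤ f 0 * Real.exp (φ t - φ 0) := by
  set g : ℝ → ℝ := fun t => f t * Real.exp (-φ t) with hgdef
  have hg : ∀ t ∈ Set.Icc 0 T, HasDerivAt g ((f' t - φ' t * f t) * Real.exp (-φ t)) t := by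
    intro t ht
    have := (hf t ht).mul ((hφ t ht).neg.exp)
    refine this.congr_deriv ?_
    simp only [Pi.neg_apply]
    ring
  have anti : AntitoneOn g (Set.Icc 0 T) := by
    apply antitoneOn_of_deriv_nonpos (convex_Icc 0 T)
    · intro t ht; exact (hg t ht).continuousAt.continuousWithinAt
    · intro t ht
      rw [interior_Icc] at ht
      exact (hg t (Set.Ioo_subset_Icc_self ht)).differentiableAt.differentiableWithinAt
    · intro t ht
      rw [interior_Icc] at ht
      rw [(hg t (Set.Ioo_subset_Icc_self ht)).deriv]
      exact mul_nonpos_of_nonpos_of_nonneg (sub_nonpos.2 (hle t (Set.Ioo_subset_Icc_self ht)))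
        (Real.exp_nonneg _)
  intro t ht
  have h0 : (0:ℝ) ∈ Set.Icc 0 T := ⟨le_refl 0, ht.1.trans ht.2⟩
  have h2 : g t ≤ g 0 := anti h0 ht ht.1
  have h3 := mul_le_mul_of_nonneg_right h2 (Real.exp_nonneg (φ t))
  calc f t = f t * Real.exp (-φ t) * Real.exp (φ t) := by
        rw [mul_assoc, ← Real.exp_add]; simp
    _ ≤ f 0 * Real.exp (-φ 0) * Real.exp (φ t) := h3
    _ = f 0 * Real.exp (φ t - φ 0) := by
        rw [mul_assoc, ← Real.exp_add]; ring_nf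
set_option maxHeartbeats 1000000 in
/-- Under the coefficient assumptions, the resource densities `RE ε`
of the chemostat system converge strongly to `Rin` in `L¹((0,T) × ℝ)` as `ε → 0`. -/
theorem resource_converges_to_Rin
    (n0 R0 Rin a m : ℝ → ℝ) (K : ℝ → ℝ → ℝ)
    (aM mlow mup KM : ℝ)
    -- initial data and coefficient assumptions
    (hn0int : Integrable n0) (hn0bdd : ∃ C, ∀ x, |n0 x| ≤ C)
    (hR0int : Integrable R0) (hR0bdd : ∃ C, ∀ y, |R0 y| ≤ C)
    (hRinint : Integrable Rin) (hRinbdd : ∃ C, ∀ y, |Rin y| ≤ C)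
    (hn0nn : ∀ x, 0 ≤ n0 x) (hR0nn : ∀ y, 0 ≤ R0 y) (hRinnn : ∀ y, 0 ≤ Rin y)
    (haM : ∀ x, |a x| ≤ aM)
    (hmlow : 0 < mlow) (hm : ∀ y, mlow ≤ m y) (hmup : ∀ y, m y ≤ mup)
    (hKnn : ∀ x y, 0 ≤ K x y) (hKM : ∀ x y, K x y ≤ KM)
    (hKuc : UniformContinuous (fun p : ℝ × ℝ => K p.1 p.2))
    -- the chemostat solutions, for each ε ∈ (0,1)
    (nE RE : ℝ → ℝ → ℝ → ℝ)
    (hnEpde : ∀ ε ∈ Set.Ioo (0:ℝ) 1, ∀ x, ∀ t, 0 ≤ t →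
      HasDerivAt (fun s => nE ε x s)
        (nE ε x t * (a x + (1/ε) * ∫ y, K x y * (RE ε y t - Rin y))) t)
    (hREpde : ∀ ε ∈ Set.Ioo (0:ℝ) 1, ∀ y, ∀ t, 0 ≤ t →
      HasDerivAt (fun s => RE ε y s)
        (m y / ε^2 * (Rin y - RE ε y t) - (1/ε) * RE ε y t * ∫ x, K x y * nE ε x t) t)
    (hnEnn : ∀ ε ∈ Set.Ioo (0:ℝ) 1, ∀ x, ∀ t, 0 ≤ t → 0 ≤ nE ε x t)
    (hREnn : ∀ ε ∈ Set.Ioo (0:ℝ) 1, ∀ y, ∀ t, 0 ≤ t → 0 ≤ RE ε y t)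
    (hnE0 : ∀ ε ∈ Set.Ioo (0:ℝ) 1, ∀ x, nE ε x 0 = n0 x)
    (hRE0 : ∀ ε ∈ Set.Ioo (0:ℝ) 1, ∀ y, RE ε y 0 = R0 y) :
    ∀ T > 0,
      Tendsto (fun ε => ∫ t in Set.Ioc (0:ℝ) T, ∫ y, |RE ε y t - Rin y|)
        (nhdsWithin 0 (Set.Ioo 0 1)) (nhds 0) := by
  intro T hT
  have haM0 : 0 ≤ aM := (abs_nonneg _).trans (haM 0)
  have hKM0 : 0 ≤ KM := (hKnn 0 0).trans (hKM 0 0)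
  set C0 : ℝ := ∫ y, |R0 y - Rin y| with hC0def
  have hC0int : Integrable (fun y => |R0 y - Rin y|) := (hR0int.sub hRinint).abs
  have hC00 : 0 ≤ C0 := integral_nonneg (fun y => abs_nonneg _)
  set Ecst : ℝ := Real.exp (aM * T + KM * C0 / mlow) with hEdef
  have hE0 : 0 < Ecst := Real.exp_pos _
  set N0 : ℝ := ∫ x, n0 x with hN0def
  have hN00 : 0 ≤ N0 := integral_nonneg hn0nn
  set Imax : ℝ := KM * Ecst * N0 with hImaxdef
  have hImax0 : 0 ≤ Imax := mul_nonneg (mul_nonneg hKM0 hE0.le) hN00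
  set C1 : ℝ := ∫ y, (R0 y + Rin y) with hC1def
  have hC1int : Integrable (fun y => R0 y + Rin y) := hR0int.add hRinint
  have hC10 : 0 ≤ C1 := integral_nonneg (fun y => add_nonneg (hR0nn y) (hRinnn y))
  have hSint : Integrable (fun y => 2 * Rin y + R0 y) := by
    have := (hRinint.const_mul 2).add hR0int
    exact this
  have hS0i : 0 ≤ ∫ y, (2 * Rin y + R0 y) :=
    integral_nonneg (fun y => by have h1 := hRinnn y; have h2 := hR0nn y; simp only [Pi.zero_apply]; linarith)
  set C2 : ℝ := (∫ y, (2 * Rin y + R0 y)) * Imax / mlow with hC2def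
  have hC20 : 0 ≤ C2 := div_nonneg (mul_nonneg hS0i hImax0) hmlow.le
  have hmain : ∀ ε ∈ Set.Ioo (0:ℝ) 1,
      (∫ t in Set.Ioc (0:ℝ) T, ∫ y, |RE ε y t - Rin y|) ≤ (C1 / mlow + C2 * T) * ε := by
    intro ε hεIoo
    obtain ⟨hε0, hε1⟩ := hεIoo
    have hεIoo : ε ∈ Set.Ioo (0:ℝ) 1 := ⟨hε0, hε1⟩
    have he2 : (0:ℝ) < ε ^ 2 := by positivity
    have hk : (0:ℝ) < mlow / ε ^ 2 := by positivity
    -- Step 1 : upper bound on RE - Rin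
    have hU : ∀ y, ∀ t ∈ Set.Icc (0:ℝ) T,
        RE ε y t - Rin y ≤ |R0 y - Rin y| * Real.exp (-(mlow / ε ^ 2) * t) := by
      intro y t ht
      have hfd : ∀ s ∈ Set.Icc (0:ℝ) T, HasDerivAt (fun s => RE ε y s - Rin y)
          ((fun s => m y / ε ^ 2 * (Rin y - RE ε y s)
            - 1/ε * RE ε y s * ∫ x, K x y * nE ε x s) s) s :=
        fun s hs => (hREpde ε hεIoo y s hs.1).sub_const _
      have hφd : ∀ s ∈ Set.Icc (0:ℝ) T, HasDerivAt (fun s : ℝ => -(m y / ε ^ 2) * s)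
          ((fun _ : ℝ => -(m y / ε ^ 2)) s) s := by
        intro s _
        simpa using (hasDerivAt_id s).const_mul (-(m y / ε ^ 2))
      have hle : ∀ s ∈ Set.Icc (0:ℝ) T,
          (fun s => m y / ε ^ 2 * (Rin y - RE ε y s)
            - 1/ε * RE ε y s * ∫ x, K x y * nE ε x s) s
            ≤ (fun _ : ℝ => -(m y / ε ^ 2)) s * ((fun s => RE ε y s - Rin y) s) := by
        intro s hs
        have h1 : 0 ≤ RE ε y s := hREnn ε hεIoo y s hs.1
        have h2 : 0 ≤ ∫ x, K x y * nE ε x s :=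
          integral_nonneg (fun x => mul_nonneg (hKnn x y) (hnEnn ε hεIoo x s hs.1))
        have h3 : (0:ℝ) < 1/ε := by positivity
        simp only []
        nlinarith [mul_nonneg (mul_nonneg h3.le h1) h2]
      have hB := gronwall_aux (fun s => RE ε y s - Rin y) (fun s : ℝ => -(m y / ε ^ 2) * s)
        _ _ hfd hφd hle t ht
      simp only [mul_zero, sub_zero] at hB
      rw [hRE0 ε hεIoo y] at hB
      have hexp : Real.exp (-(m y / ε ^ 2) * t) ≤ Real.exp (-(mlow / ε ^ 2) * t) := by
        apply Real.exp_le_exp.2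
        have h4 : mlow / ε ^ 2 * t ≤ m y / ε ^ 2 * t :=
          mul_le_mul_of_nonneg_right ((div_le_div_iff_of_pos_right he2).2 (hm y)) ht.1
        linarith
      rcases le_or_gt (R0 y - Rin y) 0 with h|h
      · have h7 : (R0 y - Rin y) * Real.exp (-(m y / ε ^ 2) * t) ≤ 0 :=
          mul_nonpos_of_nonpos_of_nonneg h (Real.exp_nonneg _)
        have h5 : 0 ≤ |R0 y - Rin y| * Real.exp (-(mlow / ε ^ 2) * t) := by positivity
        linarith
      · have h6 := mul_le_mul_of_nonneg_left hexp h.le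
        rw [abs_of_pos h]
        linarith
    -- consequence : RE bounded
    have hS : ∀ y, ∀ t ∈ Set.Icc (0:ℝ) T, RE ε y t ≤ 2 * Rin y + R0 y := by
      intro y t ht
      have h1 := hU y t ht
      have h2 : Real.exp (-(mlow / ε ^ 2) * t) ≤ 1 := by
        rw [← Real.exp_zero]
        apply Real.exp_le_exp.2
        nlinarith [ht.1, hk]
      have h3 : |R0 y - Rin y| ≤ R0 y + Rin y := by
        rcases abs_cases (R0 y - Rin y) with ⟨h,_⟩|⟨h,_⟩ <;> linarith [hRinnn y, hR0nn y]
      have h4 : |R0 y - Rin y| * Real.exp (-(mlow / ε ^ 2) * t) ≤ |R0 y - Rin y| :=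
        mul_le_of_le_one_right (abs_nonneg _) h2
      linarith
    -- Step 2 : bound on nE
    have hn : ∀ x, ∀ t ∈ Set.Icc (0:ℝ) T, nE ε x t ≤ n0 x * Ecst := by
      intro x t ht
      have hεne : ε ≠ 0 := ne_of_gt hε0
      have hmne : mlow ≠ 0 := ne_of_gt hmlow
      -- bound on the coupling integral J
      have hJ : ∀ s ∈ Set.Icc (0:ℝ) T,
          (∫ y, K x y * (RE ε y s - Rin y)) ≤ KM * C0 * Real.exp (-(mlow / ε ^ 2) * s) := by
        intro s hs
        have hle : ∀ y, K x y * (RE ε y s - Rin y)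
            ≤ KM * Real.exp (-(mlow / ε ^ 2) * s) * |R0 y - Rin y| := by
          intro y
          rcases le_or_gt (RE ε y s - Rin y) 0 with h|h
          · exact le_trans (mul_nonpos_of_nonneg_of_nonpos (hKnn x y) h) (by positivity)
          · calc K x y * (RE ε y s - Rin y) ≤ KM * (RE ε y s - Rin y) :=
                  mul_le_mul_of_nonneg_right (hKM x y) h.le
              _ ≤ KM * (|R0 y - Rin y| * Real.exp (-(mlow / ε ^ 2) * s)) :=
                  mul_le_mul_of_nonneg_left (hU y s hs) hKM0
              _ = KM * Real.exp (-(mlow / ε ^ 2) * s) * |R0 y - Rin y| := by ring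
        calc (∫ y, K x y * (RE ε y s - Rin y))
            ≤ ∫ y, KM * Real.exp (-(mlow / ε ^ 2) * s) * |R0 y - Rin y| :=
              integral_le_of_le' (hC0int.const_mul _) (fun y => by positivity) hle
          _ = KM * Real.exp (-(mlow / ε ^ 2) * s) * C0 := integral_const_mul _ _
          _ = KM * C0 * Real.exp (-(mlow / ε ^ 2) * s) := by ring
      -- Gronwall with primitive φ
      have hφd : ∀ s ∈ Set.Icc (0:ℝ) T,
          HasDerivAt (fun s : ℝ => aM * s - KM * C0 * ε / mlow * Real.exp (-(mlow / ε ^ 2) * s))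
            ((fun s : ℝ => aM + KM * C0 / ε * Real.exp (-(mlow / ε ^ 2) * s)) s) s := by
        intro s _
        have h1 : HasDerivAt (fun s : ℝ => aM * s) aM s := by
          simpa using (hasDerivAt_id s).const_mul aM
        have h2 : HasDerivAt (fun s : ℝ => Real.exp (-(mlow / ε ^ 2) * s))
            (Real.exp (-(mlow / ε ^ 2) * s) * (-(mlow / ε ^ 2))) s := by
          have h2' := ((hasDerivAt_id s).const_mul (-(mlow / ε ^ 2))).exp
          simpa using h2'
        have h3 := h1.sub (h2.const_mul (KM * C0 * ε / mlow))
        refine h3.congr_deriv ?_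
        field_simp
        ring
      have hfd : ∀ s ∈ Set.Icc (0:ℝ) T, HasDerivAt (fun s => nE ε x s)
          ((fun s => nE ε x s * (a x + 1/ε * ∫ y, K x y * (RE ε y s - Rin y))) s) s :=
        fun s hs => hnEpde ε hεIoo x s hs.1
      have hle : ∀ s ∈ Set.Icc (0:ℝ) T,
          (fun s => nE ε x s * (a x + 1/ε * ∫ y, K x y * (RE ε y s - Rin y))) s
            ≤ (fun s : ℝ => aM + KM * C0 / ε * Real.exp (-(mlow / ε ^ 2) * s)) s
              * nE ε x s := by
        intro s hs
        have h1 : 0 ≤ nE ε x s := hnEnn ε hεIoo x s hs.1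
        have h2 := hJ s hs
        have h3 : a x ≤ aM := (abs_le.1 (haM x)).2
        have h4 : (0:ℝ) < 1/ε := by positivity
        have h5 : a x + 1/ε * (∫ y, K x y * (RE ε y s - Rin y))
            ≤ aM + KM * C0 / ε * Real.exp (-(mlow / ε ^ 2) * s) := by
          have h6 := mul_le_mul_of_nonneg_left h2 h4.le
          have h7 : 1/ε * (KM * C0 * Real.exp (-(mlow / ε ^ 2) * s))
              = KM * C0 / ε * Real.exp (-(mlow / ε ^ 2) * s) := by ring
          linarith
        simp only []
        nlinarith [mul_le_mul_of_nonneg_left h5 h1]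
      have hB := gronwall_aux (fun s => nE ε x s)
        (fun s : ℝ => aM * s - KM * C0 * ε / mlow * Real.exp (-(mlow / ε ^ 2) * s))
        _ _ hfd hφd hle t ht
      simp only [mul_zero, neg_zero, Real.exp_zero, mul_one] at hB
      rw [hnE0 ε hεIoo x] at hB
      -- hB : nE ε x t ≤ n0 x * exp (aM*t - B*e + B)   with B = KM*C0*ε/mlow
      have harg : aM * t - KM * C0 * ε / mlow * Real.exp (-(mlow / ε ^ 2) * t)
          - (aM * 0 - KM * C0 * ε / mlow) ≤ aM * T + KM * C0 / mlow := by
        have h1 : aM * t ≤ aM * T := mul_le_mul_of_nonneg_left ht.2 haM0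
        have h2 : (0:ℝ) ≤ KM * C0 * ε / mlow := by positivity
        have h3 : KM * C0 * ε / mlow ≤ KM * C0 / mlow := by
          have h3' : KM * C0 * ε ≤ KM * C0 :=
            mul_le_of_le_one_right (mul_nonneg hKM0 hC00) hε1.le
          exact div_le_div_of_nonneg_right h3' hmlow.le
        have h4 : 0 ≤ KM * C0 * ε / mlow * Real.exp (-(mlow / ε ^ 2) * t) := by positivity
        linarith
      calc nE ε x t ≤ n0 x * Real.exp (aM * t
              - KM * C0 * ε / mlow * Real.exp (-(mlow / ε ^ 2) * t)
              - (aM * 0 - KM * C0 * ε / mlow)) := by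
            convert hB using 4
            simp
        _ ≤ n0 x * Ecst := by
            rw [hEdef]
            exact mul_le_mul_of_nonneg_left (Real.exp_le_exp.2 harg) (hn0nn x)
    -- Step 3 : bound on the consumption integral
    have hI : ∀ y, ∀ t ∈ Set.Icc (0:ℝ) T, (∫ x, K x y * nE ε x t) ≤ Imax := by
      intro y t ht
      calc (∫ x, K x y * nE ε x t) ≤ ∫ x, KM * Ecst * n0 x := by
            apply integral_le_of_le' (hn0int.const_mul _)
              (fun x => mul_nonneg (mul_nonneg hKM0 hE0.le) (hn0nn x))
            intro x
            calc K x y * nE ε x t ≤ KM * nE ε x t :=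
                  mul_le_mul_of_nonneg_right (hKM x y) (hnEnn ε hεIoo x t ht.1)
              _ ≤ KM * (n0 x * Ecst) := mul_le_mul_of_nonneg_left (hn x t ht) hKM0
              _ = KM * Ecst * n0 x := by ring
        _ = KM * Ecst * N0 := integral_const_mul _ _
        _ = Imax := by rw [hImaxdef]
    -- Step 4 : lower bound on RE - Rin
    have hV : ∀ y, ∀ t ∈ Set.Icc (0:ℝ) T,
        Rin y - RE ε y t ≤ |R0 y - Rin y| * Real.exp (-(mlow / ε ^ 2) * t)
          + ε * (2 * Rin y + R0 y) * Imax / mlow := by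
      intro y t ht
      have hSy : 0 ≤ 2 * Rin y + R0 y := by linarith [hRinnn y, hR0nn y]
      have hD0 : 0 ≤ ε * (2 * Rin y + R0 y) * Imax / mlow :=
        div_nonneg (mul_nonneg (mul_nonneg hε0.le hSy) hImax0) hmlow.le
      have hfd : ∀ s ∈ Set.Icc (0:ℝ) T,
          HasDerivAt (fun s => Rin y - RE ε y s - ε * (2 * Rin y + R0 y) * Imax / mlow)
            ((fun s => -(m y / ε ^ 2 * (Rin y - RE ε y s)
              - 1/ε * RE ε y s * ∫ x, K x y * nE ε x s)) s) s :=
        fun s hs => ((hREpde ε hεIoo y s hs.1).const_sub (Rin y)).sub_const _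
      have hφd : ∀ s ∈ Set.Icc (0:ℝ) T, HasDerivAt (fun s : ℝ => -(m y / ε ^ 2) * s)
          ((fun _ : ℝ => -(m y / ε ^ 2)) s) s := by
        intro s _
        simpa using (hasDerivAt_id s).const_mul (-(m y / ε ^ 2))
      have hle : ∀ s ∈ Set.Icc (0:ℝ) T,
          (fun s => -(m y / ε ^ 2 * (Rin y - RE ε y s)
              - 1/ε * RE ε y s * ∫ x, K x y * nE ε x s)) s
            ≤ (fun _ : ℝ => -(m y / ε ^ 2)) s
              * ((fun s => Rin y - RE ε y s - ε * (2 * Rin y + R0 y) * Imax / mlow) s) := by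
        intro s hs
        have h1 : 0 ≤ RE ε y s := hREnn ε hεIoo y s hs.1
        have h2 : 0 ≤ ∫ x, K x y * nE ε x s :=
          integral_nonneg (fun x => mul_nonneg (hKnn x y) (hnEnn ε hεIoo x s hs.1))
        have h3 := hS y s hs
        have h4 := hI y s hs
        have hq : RE ε y s * (∫ x, K x y * nE ε x s) ≤ (2 * Rin y + R0 y) * Imax :=
          mul_le_mul h3 h4 h2 hSy
        -- key : (1/ε) * q ≤ (m y/ε^2) * D
        have hkey : 1/ε * ((2 * Rin y + R0 y) * Imax)
            ≤ m y / ε ^ 2 * (ε * (2 * Rin y + R0 y) * Imax / mlow) := by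
          have hεne : ε ≠ 0 := ne_of_gt hε0
          have hmne : mlow ≠ 0 := ne_of_gt hmlow
          have e1 : m y / ε ^ 2 * (ε * (2 * Rin y + R0 y) * Imax / mlow)
              = m y * ((2 * Rin y + R0 y) * Imax) / (mlow * ε) := by
            field_simp
          have e2 : 1/ε * ((2 * Rin y + R0 y) * Imax)
              = mlow * ((2 * Rin y + R0 y) * Imax) / (mlow * ε) := by
            field_simp
          rw [e1, e2]
          have hq0 : 0 ≤ (2 * Rin y + R0 y) * Imax := mul_nonneg hSy hImax0
          have h5 : mlow * ((2 * Rin y + R0 y) * Imax) ≤ m y * ((2 * Rin y + R0 y) * Imax) :=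
            mul_le_mul_of_nonneg_right (hm y) hq0
          exact div_le_div_of_nonneg_right h5 (by positivity)
        simp only []
        have h6 : 1/ε * (RE ε y s * ∫ x, K x y * nE ε x s)
            ≤ 1/ε * ((2 * Rin y + R0 y) * Imax) :=
          mul_le_mul_of_nonneg_left hq (by positivity)
        linarith [h6, hkey]
      have hB := gronwall_aux
        (fun s => Rin y - RE ε y s - ε * (2 * Rin y + R0 y) * Imax / mlow)
        (fun s : ℝ => -(m y / ε ^ 2) * s) _ _ hfd hφd hle t ht
      simp only [mul_zero, sub_zero] at hB
      rw [hRE0 ε hεIoo y] at hB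
      have hexp : Real.exp (-(m y / ε ^ 2) * t) ≤ Real.exp (-(mlow / ε ^ 2) * t) := by
        apply Real.exp_le_exp.2
        have h4 : mlow / ε ^ 2 * t ≤ m y / ε ^ 2 * t :=
          mul_le_mul_of_nonneg_right ((div_le_div_iff_of_pos_right he2).2 (hm y)) ht.1
        linarith
      rcases le_or_gt (Rin y - R0 y - ε * (2 * Rin y + R0 y) * Imax / mlow) 0 with h|h
      · have h7 : (Rin y - R0 y - ε * (2 * Rin y + R0 y) * Imax / mlow)
            * Real.exp (-(m y / ε ^ 2) * t) ≤ 0 :=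
          mul_nonpos_of_nonpos_of_nonneg h (Real.exp_nonneg _)
        have h5 : 0 ≤ |R0 y - Rin y| * Real.exp (-(mlow / ε ^ 2) * t) := by positivity
        linarith
      · have hv0 : Rin y - R0 y - ε * (2 * Rin y + R0 y) * Imax / mlow ≤ |R0 y - Rin y| := by
          rw [abs_sub_comm]
          calc Rin y - R0 y - ε * (2 * Rin y + R0 y) * Imax / mlow ≤ Rin y - R0 y := by
                linarith
            _ ≤ |Rin y - R0 y| := le_abs_self _
        have h6 : (Rin y - R0 y - ε * (2 * Rin y + R0 y) * Imax / mlow)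
              * Real.exp (-(m y / ε ^ 2) * t)
            ≤ |R0 y - Rin y| * Real.exp (-(mlow / ε ^ 2) * t) :=
          mul_le_mul hv0 hexp (Real.exp_nonneg _) (abs_nonneg _)
        linarith
    -- Step 5 : integrate in y
    have hY : ∀ t ∈ Set.Icc (0:ℝ) T,
        (∫ y, |RE ε y t - Rin y|) ≤ C1 * Real.exp (-(mlow / ε ^ 2) * t) + ε * C2 := by
      intro t ht
      have hptw : ∀ y, |RE ε y t - Rin y|
          ≤ (R0 y + Rin y) * Real.exp (-(mlow / ε ^ 2) * t)
            + (2 * Rin y + R0 y) * (ε * Imax / mlow) := by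
        intro y
        have h1 := hU y t ht
        have h2 := hV y t ht
        have h3 : |R0 y - Rin y| ≤ R0 y + Rin y := by
          rcases abs_cases (R0 y - Rin y) with ⟨h,_⟩|⟨h,_⟩ <;> linarith [hRinnn y, hR0nn y]
        have hexp0 : 0 ≤ Real.exp (-(mlow / ε ^ 2) * t) := Real.exp_nonneg _
        have hSy : 0 ≤ 2 * Rin y + R0 y := by linarith [hRinnn y, hR0nn y]
        have h4 : 0 ≤ (2 * Rin y + R0 y) * (ε * Imax / mlow) :=
          mul_nonneg hSy (by positivity)
        have h5 : |R0 y - Rin y| * Real.exp (-(mlow / ε ^ 2) * t)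
            ≤ (R0 y + Rin y) * Real.exp (-(mlow / ε ^ 2) * t) :=
          mul_le_mul_of_nonneg_right h3 hexp0
        have h6 : ε * (2 * Rin y + R0 y) * Imax / mlow
            = (2 * Rin y + R0 y) * (ε * Imax / mlow) := by ring
        rw [abs_le]
        constructor
        · nlinarith [h2, h5]
        · nlinarith [h1, h5]
      have hint1 : Integrable (fun y => (R0 y + Rin y) * Real.exp (-(mlow / ε ^ 2) * t)) :=
        hC1int.mul_const _
      have hint2 : Integrable (fun y => (2 * Rin y + R0 y) * (ε * Imax / mlow)) :=
        hSint.mul_const _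
      calc (∫ y, |RE ε y t - Rin y|)
          ≤ ∫ y, ((R0 y + Rin y) * Real.exp (-(mlow / ε ^ 2) * t)
              + (2 * Rin y + R0 y) * (ε * Imax / mlow)) := by
            apply integral_le_of_le' (hint1.add hint2) ?_ hptw
            intro y
            have hSy : 0 ≤ 2 * Rin y + R0 y := by linarith [hRinnn y, hR0nn y]
            have h8 : 0 ≤ R0 y + Rin y := add_nonneg (hR0nn y) (hRinnn y)
            exact add_nonneg (mul_nonneg h8 (Real.exp_nonneg _))
              (mul_nonneg hSy (div_nonneg (mul_nonneg hε0.le hImax0) hmlow.le))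
        _ = (∫ y, (R0 y + Rin y) * Real.exp (-(mlow / ε ^ 2) * t))
            + ∫ y, (2 * Rin y + R0 y) * (ε * Imax / mlow) := integral_add hint1 hint2
        _ = C1 * Real.exp (-(mlow / ε ^ 2) * t)
            + (∫ y, (2 * Rin y + R0 y)) * (ε * Imax / mlow) := by
            rw [integral_mul_const, integral_mul_const]
        _ = C1 * Real.exp (-(mlow / ε ^ 2) * t) + ε * C2 := by
            rw [hC2def]; ring
    -- Step 6 : integrate in t
    have hεne : ε ≠ 0 := ne_of_gt hε0
    have hkne : mlow / ε ^ 2 ≠ 0 := ne_of_gt hk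
    have hGcont : Continuous (fun t : ℝ => C1 * Real.exp (-(mlow / ε ^ 2) * t) + ε * C2) := by
      continuity
    have hGint : IntegrableOn (fun t : ℝ => C1 * Real.exp (-(mlow / ε ^ 2) * t) + ε * C2)
        (Set.Ioc 0 T) := by
      have h := hGcont.intervalIntegrable (μ := volume) 0 T
      rwa [intervalIntegrable_iff_integrableOn_Ioc_of_le hT.le] at h
    have hG0 : ∀ t ∈ Set.Ioc (0:ℝ) T,
        0 ≤ C1 * Real.exp (-(mlow / ε ^ 2) * t) + ε * C2 := fun t _ =>
      add_nonneg (mul_nonneg hC10 (Real.exp_nonneg _)) (mul_nonneg hε0.le hC20)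
    have h1 := setIntegral_le_of_le' measurableSet_Ioc hGint hG0
      (fun t htm => hY t ⟨htm.1.le, htm.2⟩)
    have h2 : (∫ t in Set.Ioc (0:ℝ) T, (C1 * Real.exp (-(mlow / ε ^ 2) * t) + ε * C2))
        = C1 * ((1 - Real.exp (-(mlow / ε ^ 2) * T)) / (mlow / ε ^ 2)) + ε * C2 * T := by
      rw [← intervalIntegral.integral_of_le hT.le]
      have hprim : ∀ s ∈ Set.uIcc (0:ℝ) T, HasDerivAt
          (fun u : ℝ => C1 * (-(1/(mlow / ε ^ 2)) * Real.exp (-(mlow / ε ^ 2) * u)) + ε * C2 * u)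
          (C1 * Real.exp (-(mlow / ε ^ 2) * s) + ε * C2) s := by
        intro s _
        have h2' : HasDerivAt (fun u : ℝ => Real.exp (-(mlow / ε ^ 2) * u))
            (Real.exp (-(mlow / ε ^ 2) * s) * (-(mlow / ε ^ 2))) s := by
          simpa using ((hasDerivAt_id s).const_mul (-(mlow / ε ^ 2))).exp
        have h3' : HasDerivAt (fun u : ℝ => ε * C2 * u) (ε * C2) s := by
          simpa using (hasDerivAt_id s).const_mul (ε * C2)
        have h4' := ((h2'.const_mul (-(1/(mlow / ε ^ 2)))).const_mul C1).add h3'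
        refine h4'.congr_deriv ?_
        field_simp
      rw [intervalIntegral.integral_eq_sub_of_hasDerivAt hprim (hGcont.intervalIntegrable (μ := volume) 0 T)]
      simp only [mul_zero, neg_zero, Real.exp_zero, mul_one, add_zero]
      field_simp
      ring
    have h3 : (1 - Real.exp (-(mlow / ε ^ 2) * T)) / (mlow / ε ^ 2) ≤ ε ^ 2 / mlow := by
      rw [div_le_iff₀ hk]
      have h5 : ε ^ 2 / mlow * (mlow / ε ^ 2) = 1 := by field_simp
      rw [h5]
      nlinarith [Real.exp_nonneg (-(mlow / ε ^ 2) * T)]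
    have h4 : C1 * ((1 - Real.exp (-(mlow / ε ^ 2) * T)) / (mlow / ε ^ 2))
        ≤ C1 * (ε ^ 2 / mlow) := mul_le_mul_of_nonneg_left h3 hC10
    have h6 : C1 * (ε ^ 2 / mlow) ≤ C1 / mlow * ε := by
      have e1 : C1 * (ε ^ 2 / mlow) = C1 / mlow * (ε * ε) := by ring
      rw [e1]
      exact mul_le_mul_of_nonneg_left (by nlinarith [hε0, hε1]) (div_nonneg hC10 hmlow.le)
    calc (∫ t in Set.Ioc (0:ℝ) T, ∫ y, |RE ε y t - Rin y|)
        ≤ ∫ t in Set.Ioc (0:ℝ) T, (C1 * Real.exp (-(mlow / ε ^ 2) * t) + ε * C2) := h1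
      _ = C1 * ((1 - Real.exp (-(mlow / ε ^ 2) * T)) / (mlow / ε ^ 2)) + ε * C2 * T := h2
      _ ≤ (C1 / mlow + C2 * T) * ε := by nlinarith [h4, h6]
  have hF0 : ∀ ε ∈ Set.Ioo (0:ℝ) 1,
      0 ≤ ∫ t in Set.Ioc (0:ℝ) T, ∫ y, |RE ε y t - Rin y| := fun ε _ =>
    setIntegral_nonneg measurableSet_Ioc (fun t _ => integral_nonneg (fun y => abs_nonneg _))
  have hlin : Tendsto (fun ε : ℝ => (C1 / mlow + C2 * T) * ε)
      (nhdsWithin 0 (Set.Ioo 0 1)) (nhds 0) := by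
    have h := (continuous_const.mul continuous_id).tendsto (0:ℝ)
      (f := fun ε : ℝ => (C1 / mlow + C2 * T) * ε)
    rw [mul_zero] at h
    exact h.mono_left nhdsWithin_le_nhds
  apply tendsto_of_tendsto_of_tendsto_of_le_of_le' tendsto_const_nhds hlin
  · filter_upwards [self_mem_nhdsWithin] with ε hε using hF0 ε hε
  · filter_upwards [self_mem_nhdsWithin] with ε hε using hmain ε hε
end

section
/- Let α > 0, β > 0, and let γ be defined by γ(2α + β) = α². Then the function c(x,x') := √(π/(2α+β)) · e^{−[αx² + α(x')² − γ(x+x')²]} is not a function of x − x' alone: there exist x₁, x₁', x₂, x₂' ∈ ℝ with x₁ − x₁' = x₂ − x₂' but c(x₁, x₁') ≠ c(x₂, x₂'). In particular, c(x,x') is not equal to e^{−(α−γ)(x−x')²} √(π/(2α+β)) for all x, x' when β ≠ 0. -/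
open Real

/-- For `α > 0`, `β > 0` and `γ(2α+β) = α²`, the converted kernel
`c(x,x') = √(π/(2α+β)) e^{−[αx² + α(x')² − γ(x+x')²]}` is not a function of
`x − x'` alone; in particular it is not equal to
`e^{−(α−γ)(x−x')²} √(π/(2α+β))` for all `x, x'`. -/
theorem converted_kernel_not_gaussian (α β γ : ℝ) (hα : 0 < α) (hβ : 0 < β)
    (hγ : γ * (2 * α + β) = α ^ 2) :
    (∃ x₁ x₁' x₂ x₂' : ℝ, x₁ - x₁' = x₂ - x₂' ∧
      Real.sqrt (π / (2 * α + β)) *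
          Real.exp (-(α * x₁^2 + α * x₁'^2 - γ * (x₁ + x₁')^2))
        ≠ Real.sqrt (π / (2 * α + β)) *
            Real.exp (-(α * x₂^2 + α * x₂'^2 - γ * (x₂ + x₂')^2))) ∧
    ¬ (∀ x x' : ℝ,
        Real.sqrt (π / (2 * α + β)) *
            Real.exp (-(α * x^2 + α * x'^2 - γ * (x + x')^2))
          = Real.exp (-(α - γ) * (x - x')^2) * Real.sqrt (π / (2 * α + β))) := by
  have hS : 0 < 2 * α + β := by linarith
  have hsqrt : 0 < Real.sqrt (π / (2 * α + β)) :=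
    Real.sqrt_pos.mpr (div_pos Real.pi_pos hS)
  have hne : 2 * γ ≠ α := by
    intro h
    have : α * (2 * α + β) = 2 * α ^ 2 := by nlinarith
    nlinarith
  have hexp : (0 : ℝ) ≠ -(α * 1 ^ 2 + α * 1 ^ 2 - γ * (1 + 1) ^ 2) := by
    intro h
    apply hne
    nlinarith
  have key : Real.exp (-(α * (0:ℝ) ^ 2 + α * (0:ℝ) ^ 2 - γ * ((0:ℝ) + 0) ^ 2))
      ≠ Real.exp (-(α * (1:ℝ) ^ 2 + α * (1:ℝ) ^ 2 - γ * ((1:ℝ) + 1) ^ 2)) := by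
    simp only [ne_eq, Real.exp_eq_exp]
    intro h
    exact hexp (by simpa using h)
  constructor
  · refine ⟨0, 0, 1, 1, by ring, ?_⟩
    intro h
    exact key (mul_left_cancel₀ (ne_of_gt hsqrt) h)
  · intro h
    have h0 := h 0 0
    have h1 := h 1 1
    simp only [sub_self] at h0 h1
    rw [mul_comm] at h0 h1
    have := h0.trans h1.symm
    have := mul_right_cancel₀ (ne_of_gt hsqrt) this
    exact key (by simpa using this)
end

section
/- Suppose (n_ε, R_ε) solves the chemostat system with parameter ε > 0 (with all integrals below finite and differentiation under the integral sign valid). Define c(x,x') := ∫_ℝ K(x,y)(R_in(y)/m(y))K(x',y) dy and I_ε(x,t) := −ε ∂_t ∫_ℝ (K(x,y)/m(y)) R_ε(y,t) dy + ∫_ℝ K(x,y) ((R_in(y) − R_ε(y,t))/m(y)) ∫_ℝ K(x',y) n_ε(x',t) dx' dy. Then for all x ∈ ℝ and t ≥ 0: (1/ε) ∫_ℝ K(x,y)(R_ε(y,t) − R_in(y)) dy = −∫_ℝ c(x,x') n_ε(x',t) dx' + I_ε(x,t), and consequently ∂_t n_ε(x,t) = n_ε(x,t)[a(x) − ∫_ℝ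 c(x,x') n_ε(x',t) dx' + I_ε(x,t)]. -/
open MeasureTheory

/-- rewriting of the growth rate of `n_ε`:
`(1/ε) ∫ K(x,y)(R_ε(y,t) − R_in(y)) dy = −∫ c(x,x') n_ε(x',t) dx' + I_ε(x,t)`
with `c(x,x') = ∫ K(x,y)(R_in(y)/m(y))K(x',y) dy` and
`I_ε(x,t) = −ε ∂ₜ ∫ (K(x,y)/m(y)) R_ε(y,t) dy
  + ∫ K(x,y)((R_in(y) − R_ε(y,t))/m(y)) ∫ K(x',y) n_ε(x',t) dx' dy`,
and consequently
`∂ₜ n_ε = n_ε [a − ∫ c(x,x') n_ε(x',t) dx' + I_ε]`. -/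
theorem growth_rate_rewriting (ε : ℝ) (hε : 0 < ε)
    (a m Rin : ℝ → ℝ) (K : ℝ → ℝ → ℝ) (nE RE Rt : ℝ → ℝ → ℝ)
    (hm : ∀ y, 0 < m y) (hK : ∀ x y, 0 ≤ K x y) (hRin : ∀ y, 0 ≤ Rin y)
    -- the resource equation, with time derivative Rt
    (hRt : ∀ y t, Rt y t
      = m y / ε^2 * (Rin y - RE y t) - (1/ε) * RE y t * ∫ x, K x y * nE x t)
    (hRpde : ∀ y t, HasDerivAt (fun s => RE y s) (Rt y t) t)
    -- the consumer equation
    (hnpde : ∀ x t, HasDerivAt (fun s => nE x s)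
      (nE x t * (a x + (1/ε) * ∫ y, K x y * (RE y t - Rin y))) t)
    -- differentiation under the integral sign is valid
    (hDt : ∀ x t, HasDerivAt (fun s => ∫ y, K x y / m y * RE y s)
      (∫ y, K x y / m y * Rt y t) t)
    -- all integrals below are finite
    (hI1 : ∀ x t, Integrable (fun y => K x y * (Rin y / m y) * ∫ x', K x' y * nE x' t))
    (hI2 : ∀ x t, Integrable
      (fun y => K x y * ((Rin y - RE y t) / m y) * ∫ x', K x' y * nE x' t))
    (hI3 : ∀ x t, Integrable (fun y => K x y / m y * Rt y t))
    -- interchange of the order of integration (Fubini) is valid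
    (hFub : ∀ x t, (∫ y, K x y * (Rin y / m y) * ∫ x', K x' y * nE x' t)
      = ∫ x', (∫ y, K x y * (Rin y / m y) * K x' y) * nE x' t) :
    ∀ x t,
      (1/ε) * (∫ y, K x y * (RE y t - Rin y))
        = -(∫ x', (∫ y, K x y * (Rin y / m y) * K x' y) * nE x' t)
          + (-(ε * deriv (fun s => ∫ y, K x y / m y * RE y s) t)
             + ∫ y, K x y * ((Rin y - RE y t) / m y) * ∫ x', K x' y * nE x' t) ∧
      HasDerivAt (fun s => nE x s)
        (nE x t * (a x - (∫ x', (∫ y, K x y * (Rin y / m y) * K x' y) * nE x' t)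
          + (-(ε * deriv (fun s => ∫ y, K x y / m y * RE y s) t)
             + ∫ y, K x y * ((Rin y - RE y t) / m y) * ∫ x', K x' y * nE x' t))) t := by
  intro x t
  have hderiv : deriv (fun s => ∫ y, K x y / m y * RE y s) t = ∫ y, K x y / m y * Rt y t :=
    (hDt x t).deriv
  have key : (1/ε) * (∫ y, K x y * (RE y t - Rin y))
      = -(∫ x', (∫ y, K x y * (Rin y / m y) * K x' y) * nE x' t)
        + (-(ε * deriv (fun s => ∫ y, K x y / m y * RE y s) t)
           + ∫ y, K x y * ((Rin y - RE y t) / m y) * ∫ x', K x' y * nE x' t) := by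
    rw [hderiv, ← hFub x t]
    calc (1/ε) * (∫ y, K x y * (RE y t - Rin y))
        = ∫ y, (1/ε) * (K x y * (RE y t - Rin y)) := (integral_const_mul _ _).symm
      _ = ∫ y, ((-ε) * (K x y / m y * Rt y t)
            + ((K x y * ((Rin y - RE y t) / m y) * ∫ x', K x' y * nE x' t)
               - K x y * (Rin y / m y) * ∫ x', K x' y * nE x' t)) := by
          congr 1; funext y
          rw [hRt y t]
          have h1 : m y ≠ 0 := (hm y).ne'
          have h2 : ε ≠ 0 := hε.ne'
          field_simp
          ring
      _ = (-ε) * (∫ y, K x y / m y * Rt y t)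
          + ((∫ y, K x y * ((Rin y - RE y t) / m y) * ∫ x', K x' y * nE x' t)
             - ∫ y, K x y * (Rin y / m y) * ∫ x', K x' y * nE x' t) := by
          have h1 : Integrable (fun y => (-ε) * (K x y / m y * Rt y t)) :=
            (hI3 x t).const_mul _
          have h2 : Integrable (fun y =>
              (K x y * ((Rin y - RE y t) / m y) * ∫ x', K x' y * nE x' t)
              - K x y * (Rin y / m y) * ∫ x', K x' y * nE x' t) :=
            (hI2 x t).sub (hI1 x t)
          rw [integral_add h1 h2, integral_const_mul, integral_sub (hI2 x t) (hI1 x t)]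
      _ = -(∫ y, K x y * (Rin y / m y) * ∫ x', K x' y * nE x' t)
          + (-(ε * ∫ y, K x y / m y * Rt y t)
             + ∫ y, K x y * ((Rin y - RE y t) / m y) * ∫ x', K x' y * nE x' t) := by
          ring
  refine ⟨key, ?_⟩
  have heq : nE x t * (a x - (∫ x', (∫ y, K x y * (Rin y / m y) * K x' y) * nE x' t)
          + (-(ε * deriv (fun s => ∫ y, K x y / m y * RE y s) t)
             + ∫ y, K x y * ((Rin y - RE y t) / m y) * ∫ x', K x' y * nE x' t))
      = nE x t * (a x + (1/ε) * ∫ y, K x y * (RE y t - Rin y)) := by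
    rw [key]; ring
  rw [heq]
  exact hnpde x t
end

section
/- Let K : ℝ × ℝ → ℝ be bounded, measurable and nonnegative, w : ℝ → [0,∞) integrable, and c(x,x') := ∫_ℝ K(x,y) w(y) K(x',y) dy. Let a : ℝ → ℝ be bounded and let n̄ : ℝ → [0,∞) be integrable with: a(x) − ∫_ℝ c(x,x') n̄(x') dx' ≤ 0 for all x ∈ ℝ, and a(x) − ∫_ℝ c(x,x') n̄(x') dx' = 0 at every x with n̄(x) > 0 (i.e. n̄ is an Evolutionary Stable Distribution). Then for every integrable n : ℝ → [0,∞), the dissipation D_dc := −∫_ℝ∫_ℝ c(x,x')(n(x) − n̄(x))(n(x') − n̄(x')) dx dx' + ∫_ℝ n(x)(a(x) − ∫_ℝ c(x,x') n̄(x') dx') dx satisfies D_dc ≤ 0. -/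
open MeasureTheory

/-- for the converted kernel `c(x,x') = ∫ K(x,y) w(y) K(x',y) dy`
and an Evolutionary Stable Distribution `n̄`, the dissipation of the direct
competition Lyapunov functional is nonpositive. -/
theorem dissipation_nonpositive (K : ℝ → ℝ → ℝ) (w a nbar : ℝ → ℝ) (KM aM : ℝ)
    (hKmeas : Measurable (fun p : ℝ × ℝ => K p.1 p.2))
    (hKb : ∀ x y, K x y ≤ KM) (hK : ∀ x y, 0 ≤ K x y)
    (hw : Integrable w) (hwnn : ∀ y, 0 ≤ w y)
    (haM : ∀ x, |a x| ≤ aM)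
    (hnbar : Integrable nbar) (hnbarnn : ∀ x, 0 ≤ nbar x)
    -- Evolutionary Stable Distribution conditions
    (hESDle : ∀ x, a x - (∫ x', (∫ y, K x y * w y * K x' y) * nbar x') ≤ 0)
    (hESDeq : ∀ x, 0 < nbar x →
      a x - (∫ x', (∫ y, K x y * w y * K x' y) * nbar x') = 0) :
    ∀ n : ℝ → ℝ, Integrable n → (∀ x, 0 ≤ n x) →
      -(∫ x, ∫ x',
          (∫ y, K x y * w y * K x' y) * (n x - nbar x) * (n x' - nbar x'))
        + (∫ x, n x * (a x - ∫ x', (∫ y, K x y * w y * K x' y) * nbar x')) ≤ 0 := by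
  intro n hn hnn
  set m : ℝ → ℝ := fun x => n x - nbar x with hmdef
  have hm : Integrable m := hn.sub hnbar
  have hKM0 : (0 : ℝ) ≤ KM := (hK 0 0).trans (hKb 0 0)
  have hKx : ∀ y, Measurable fun x => K x y := fun y =>
    hKmeas.comp (measurable_id.prodMk measurable_const)
  have hKy : ∀ x, Measurable fun y => K x y := fun x =>
    hKmeas.comp (measurable_const.prodMk measurable_id)
  have hKsw : Measurable fun p : ℝ × ℝ => K p.2 p.1 :=
    hKmeas.comp measurable_swap
  have hKnorm : ∀ x y, ‖K x y‖ ≤ KM := fun x y => by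
    rw [Real.norm_eq_abs, abs_of_nonneg (hK x y)]; exact hKb x y
  -- integrability of x ↦ K x y * m x
  have hint : ∀ y, Integrable (fun x => K x y * m x) := fun y =>
    hm.bdd_mul (hKx y).aestronglyMeasurable (Filter.Eventually.of_forall fun x => hKnorm x y)
  set C : ℝ := ∫ x, |m x| with hCdef
  have hC0 : 0 ≤ C := integral_nonneg fun x => abs_nonneg _
  set g : ℝ → ℝ := fun y => ∫ x, K x y * m x with hgdef
  have hgb : ∀ y, |g y| ≤ KM * C := by
    intro y
    have h0 := norm_integral_le_integral_norm (μ := volume) (fun x => K x y * m x)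
    simp only [Real.norm_eq_abs] at h0
    refine h0.trans ?_
    calc (∫ x, |K x y * m x|) ≤ ∫ x, KM * |m x| := by
          refine integral_mono_of_nonneg (Filter.Eventually.of_forall fun x => abs_nonneg _)
            (hm.abs.const_mul KM) (Filter.Eventually.of_forall fun x => ?_)
          show |K x y * m x| ≤ KM * |m x|
          rw [abs_mul, abs_of_nonneg (hK x y)]
          exact mul_le_mul_of_nonneg_right (hKb x y) (abs_nonneg _)
      _ = KM * C := integral_const_mul KM _
  have hmprod₁ : AEStronglyMeasurable (fun p : ℝ × ℝ => m p.1) (volume.prod volume) :=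
    hm.aestronglyMeasurable.comp_quasiMeasurePreserving
      Measure.quasiMeasurePreserving_fst
  have hmprod₂ : AEStronglyMeasurable (fun p : ℝ × ℝ => m p.2) (volume.prod volume) :=
    hm.aestronglyMeasurable.comp_quasiMeasurePreserving
      Measure.quasiMeasurePreserving_snd
  have hwprod : AEStronglyMeasurable (fun p : ℝ × ℝ => w p.2) (volume.prod volume) :=
    hw.aestronglyMeasurable.comp_quasiMeasurePreserving
      Measure.quasiMeasurePreserving_snd
  have hgm : AEStronglyMeasurable g volume := by
    have h1 : AEStronglyMeasurable (fun p : ℝ × ℝ => K p.2 p.1 * m p.2)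
        (volume.prod volume) := hKsw.aestronglyMeasurable.mul hmprod₂
    exact h1.integral_prod_right'
  have hgprod : AEStronglyMeasurable (fun p : ℝ × ℝ => g p.2) (volume.prod volume) :=
    hgm.comp_quasiMeasurePreserving Measure.quasiMeasurePreserving_snd
  -- quadratic form is nonnegative
  have key : (0:ℝ) ≤ ∫ x, ∫ x', (∫ y, K x y * w y * K x' y) * m x * m x' := by
    have step1 : ∀ x, (∫ x', (∫ y, K x y * w y * K x' y) * m x * m x')
        = ∫ y, K x y * w y * m x * g y := by
      intro x
      have e1 : (∫ x', (∫ y, K x y * w y * K x' y) * m x * m x')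
          = ∫ x', ∫ y, K x y * w y * K x' y * m x * m x' := by
        refine integral_congr_ae (Filter.Eventually.of_forall fun x' => ?_)
        simp only [← integral_mul_const]
      have hF : Integrable
          (Function.uncurry fun x' y => K x y * w y * K x' y * m x * m x')
          (volume.prod volume) := by
        have hdom : Integrable (fun p : ℝ × ℝ => |m p.1| * (KM * KM * |m x| * w p.2))
            (volume.prod volume) := hm.abs.mul_prod (hw.const_mul _)
        refine hdom.mono' ?_ (Filter.Eventually.of_forall fun p => ?_)
        · exact (((((hKy x).comp measurable_snd).aestronglyMeasurable.mul
            hwprod).mul hKmeas.aestronglyMeasurable).mul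
            aestronglyMeasurable_const).mul hmprod₁
        · simp only [Function.uncurry, Real.norm_eq_abs, abs_mul]
          rw [abs_of_nonneg (hK x p.2), abs_of_nonneg (hwnn p.2),
            abs_of_nonneg (hK p.1 p.2)]
          have h1 : K x p.2 * w p.2 * K p.1 p.2 ≤ KM * w p.2 * KM :=
            mul_le_mul (mul_le_mul_of_nonneg_right (hKb x p.2) (hwnn p.2))
              (hKb p.1 p.2) (hK p.1 p.2) (mul_nonneg hKM0 (hwnn p.2))
          calc K x p.2 * w p.2 * K p.1 p.2 * |m x| * |m p.1|
              ≤ KM * w p.2 * KM * |m x| * |m p.1| :=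
                mul_le_mul_of_nonneg_right
                  (mul_le_mul_of_nonneg_right h1 (abs_nonneg _)) (abs_nonneg _)
            _ = |m p.1| * (KM * KM * |m x| * w p.2) := by ring
      have e2 : (∫ x', ∫ y, K x y * w y * K x' y * m x * m x')
          = ∫ y, ∫ x', K x y * w y * K x' y * m x * m x' :=
        integral_integral_swap hF
      have e3 : (∫ y, ∫ x', K x y * w y * K x' y * m x * m x')
          = ∫ y, K x y * w y * m x * g y := by
        refine integral_congr_ae (Filter.Eventually.of_forall fun y => ?_)
        have h2 : (fun x' => K x y * w y * K x' y * m x * m x')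
            = fun x' => (K x y * w y * m x) * (K x' y * m x') := by
          funext x'; ring
        show (∫ x', K x y * w y * K x' y * m x * m x') = K x y * w y * m x * g y
        rw [h2, integral_const_mul]
      rw [e1, e2, e3]
    have e4 : (∫ x, ∫ x', (∫ y, K x y * w y * K x' y) * m x * m x')
        = ∫ x, ∫ y, K x y * w y * m x * g y :=
      integral_congr_ae (Filter.Eventually.of_forall step1)
    have hF2 : Integrable (Function.uncurry fun x y => K x y * w y * m x * g y)
        (volume.prod volume) := by
      have hdom : Integrable (fun p : ℝ × ℝ => |m p.1| * (KM * (KM * C) * w p.2))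
          (volume.prod volume) := hm.abs.mul_prod (hw.const_mul _)
      refine hdom.mono' ?_ (Filter.Eventually.of_forall fun p => ?_)
      · exact ((hKmeas.aestronglyMeasurable.mul hwprod).mul hmprod₁).mul hgprod
      · simp only [Function.uncurry, Real.norm_eq_abs, abs_mul]
        rw [abs_of_nonneg (hK p.1 p.2), abs_of_nonneg (hwnn p.2)]
        have h1 : K p.1 p.2 * w p.2 * |m p.1| ≤ KM * w p.2 * |m p.1| :=
          mul_le_mul_of_nonneg_right
            (mul_le_mul_of_nonneg_right (hKb p.1 p.2) (hwnn p.2)) (abs_nonneg _)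
        calc K p.1 p.2 * w p.2 * |m p.1| * |g p.2|
            ≤ KM * w p.2 * |m p.1| * (KM * C) :=
              mul_le_mul h1 (hgb p.2) (abs_nonneg _)
                (mul_nonneg (mul_nonneg hKM0 (hwnn p.2)) (abs_nonneg _))
          _ = |m p.1| * (KM * (KM * C) * w p.2) := by ring
    have e5 : (∫ x, ∫ y, K x y * w y * m x * g y)
        = ∫ y, ∫ x, K x y * w y * m x * g y := integral_integral_swap hF2
    have e6 : (∫ y, ∫ x, K x y * w y * m x * g y) = ∫ y, w y * g y * g y := by
      refine integral_congr_ae (Filter.Eventually.of_forall fun y => ?_)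
      have h2 : (fun x => K x y * w y * m x * g y)
          = fun x => (w y * g y) * (K x y * m x) := by
        funext x; ring
      show (∫ x, K x y * w y * m x * g y) = w y * g y * g y
      rw [h2, integral_const_mul]
    rw [e4, e5, e6]
    refine integral_nonneg fun y => ?_
    have : w y * g y * g y = w y * (g y * g y) := by ring
    rw [this]
    exact mul_nonneg (hwnn y) (mul_self_nonneg _)
  -- second term is nonpositive
  have h2 : (∫ x, n x * (a x - ∫ x', (∫ y, K x y * w y * K x' y) * nbar x')) ≤ 0 := by
    refine integral_nonpos fun x => ?_
    exact mul_nonpos_of_nonneg_of_nonpos (hnn x) (hESDle x)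
  have key' : (0:ℝ) ≤ ∫ x, ∫ x',
      (∫ y, K x y * w y * K x' y) * (n x - nbar x) * (n x' - nbar x') := key
  linarith
end

section
/- Let c : ℝ × ℝ → ℝ be bounded, measurable and symmetric, a : ℝ → ℝ bounded, and let n̄ : ℝ → [0,∞) be integrable with a(x) = ∫_ℝ c(x,x') n̄(x') dx' at every x with n̄(x) > 0 (ESD equality condition). Let n : ℝ × [0,∞) → (0,∞) solve the direct competition equation ∂_t n(x,t) = n(x,t)[a(x) − ∫_ℝ c(x,x') n(x',t) dx'] for all x, t, with n(·,t) and n̄ ln n(·,t) integrable and differentiation under the integral sign valid. Then the Lyapunov functional S_dc(t) := −∫_ℝ n̄(x) ln n(x,t) dx + ∫_ℝ n(x,t) dx satisfies for all t ≥ 0: d/dt S_dc(t) = −∫_ℝ∫_ℝ c(x,x')(n(x,t) − n̄(x))(n(x',t) − n̄(x')) dx dx' + ∫_ℝ n(x,t)(a(x) − ∫_ℝ c(x,x') n̄(x') dx') dx. -/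
open MeasureTheory

/-- derivative of the direct competition Lyapunov functional
`S_dc(t) = −∫ n̄ ln n(·,t) + ∫ n(·,t)`:
`d/dt S_dc(t) = −∫∫ c(x,x')(n−n̄)(n−n̄) + ∫ n (a − ∫ c n̄)`. -/
theorem direct_competition_lyapunov_derivative
    (c : ℝ → ℝ → ℝ) (a nbar : ℝ → ℝ) (cM aM : ℝ)
    (hcmeas : Measurable (fun p : ℝ × ℝ => c p.1 p.2))
    (hcb : ∀ x x', |c x x'| ≤ cM)
    (hcsym : ∀ x x', c x x' = c x' x)
    (haM : ∀ x, |a x| ≤ aM)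
    (hnbar : Integrable nbar) (hnbarnn : ∀ x, 0 ≤ nbar x)
    -- ESD equality condition on the support of n̄
    (hESD : ∀ x, 0 < nbar x → a x = ∫ x', c x x' * nbar x')
    (n : ℝ → ℝ → ℝ)
    (hnpos : ∀ x t, 0 < n x t)
    (hpde : ∀ x t, HasDerivAt (fun s => n x s)
      (n x t * (a x - ∫ x', c x x' * n x' t)) t)
    -- all integrals are finite
    (hnint : ∀ t, Integrable (fun x => n x t))
    (hlogint : ∀ t, Integrable (fun x => nbar x * Real.log (n x t)))
    (hcnint : ∀ x t, Integrable (fun x' => c x x' * n x' t))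
    (hcnbarint : ∀ x, Integrable (fun x' => c x x' * nbar x'))
    (hint1 : ∀ t, Integrable (fun x => n x t * (a x - ∫ x', c x x' * n x' t)))
    (hint2 : ∀ t, Integrable (fun x => nbar x * (a x - ∫ x', c x x' * n x' t)))
    (hint3 : ∀ t, Integrable
      (fun x => (n x t - nbar x) * (a x - ∫ x', c x x' * nbar x')))
    (hint4 : ∀ t, Integrable
      (fun x => (n x t - nbar x) * ∫ x', c x x' * (n x' t - nbar x')))
    -- differentiation under the integral sign is valid
    (hd1 : ∀ t, HasDerivAt (fun s => ∫ x, n x s)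
      (∫ x, n x t * (a x - ∫ x', c x x' * n x' t)) t)
    (hd2 : ∀ t, HasDerivAt (fun s => ∫ x, nbar x * Real.log (n x s))
      (∫ x, nbar x * (a x - ∫ x', c x x' * n x' t)) t) :
    ∀ t, 0 ≤ t →
      HasDerivAt (fun s => -(∫ x, nbar x * Real.log (n x s)) + ∫ x, n x s)
        (-(∫ x, ∫ x', c x x' * (n x t - nbar x) * (n x' t - nbar x'))
          + ∫ x, n x t * (a x - ∫ x', c x x' * nbar x')) t := by
  intro t _
  have hK : ∀ x, (∫ x', c x x' * (n x' t - nbar x'))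
      = (∫ x', c x x' * n x' t) - ∫ x', c x x' * nbar x' := by
    intro x
    rw [← integral_sub (hcnint x t) (hcnbarint x)]
    congr 1; ext x'; ring
  have h1 : (∫ x, n x t * (a x - ∫ x', c x x' * n x' t))
      - ∫ x, nbar x * (a x - ∫ x', c x x' * n x' t)
      = ∫ x, (n x t - nbar x) * (a x - ∫ x', c x x' * n x' t) := by
    rw [← integral_sub (hint1 t) (hint2 t)]; congr 1; ext x; ring
  have h3 : (∫ x, (n x t - nbar x) * (a x - ∫ x', c x x' * n x' t))
      = (∫ x, (n x t - nbar x) * (a x - ∫ x', c x x' * nbar x'))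
        - ∫ x, (n x t - nbar x) * ∫ x', c x x' * (n x' t - nbar x') := by
    rw [← integral_sub (hint3 t) (hint4 t)]; congr 1; ext x; rw [hK x]; ring
  have h4 : (∫ x, (n x t - nbar x) * (a x - ∫ x', c x x' * nbar x'))
      = ∫ x, n x t * (a x - ∫ x', c x x' * nbar x') := by
    congr 1; ext x
    rcases eq_or_lt_of_le (hnbarnn x) with h | h
    · rw [← h]; ring
    · rw [hESD x h]; ring
  have h5 : (∫ x, ∫ x', c x x' * (n x t - nbar x) * (n x' t - nbar x'))
      = ∫ x, (n x t - nbar x) * ∫ x', c x x' * (n x' t - nbar x') := by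
    congr 1; ext x
    rw [← integral_const_mul]
    congr 1; ext x'; ring
  have key : -(∫ x, nbar x * (a x - ∫ x', c x x' * n x' t))
      + ∫ x, n x t * (a x - ∫ x', c x x' * n x' t)
      = -(∫ x, ∫ x', c x x' * (n x t - nbar x) * (n x' t - nbar x'))
        + ∫ x, n x t * (a x - ∫ x', c x x' * nbar x') := by
    rw [h5]; linarith [h1, h3, h4]
  have h := (hd2 t).neg.add (hd1 t)
  rw [key] at h
  exact h
end
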